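/- Let m ≥ 5 be an integer and let x, y be integers with y ≥ 1 satisfying x³ − m·y³ = 1 or x³ − m·y³ = −1. Then |m^{1/3} − x/y| < 1/(2y²). -/

import Mathlib

/-- For an integer `m ≥ 5` and integers `x, y` with `y ≥ 1`
satisfying `x³ − m·y³ = ±1`, one has `|m^{1/3} − x/y| < 1/(2y²)`. -/
theorem stmt_7 (m : ℤ) (hm : 5 ≤ m) (x y : ℤ) (hy : 1 ≤ y)
    (h : x ^ 3 - m * y ^ 3 = 1 ∨ x ^ 3 - m * y ^ 3 = -1) :
    |(m : ℝ) ^ ((1 : ℝ) / 3) - (x : ℝ) / (y : ℝ)| < 1 / (2 * (y : ℝ) ^ 2) := by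
  have hmR : (5:ℝ) ≤ (m:ℝ) := by exact_mod_cast hm
  have hm0 : (0:ℝ) ≤ (m:ℝ) := by linarith
  set a : ℝ := (m:ℝ) ^ ((1:ℝ)/3) with ha
  have hapos : 0 < a := Real.rpow_pos_of_pos (by linarith) _
  have ha3 : a ^ 3 = (m:ℝ) := by
    rw [ha, ← Real.rpow_natCast ((m:ℝ) ^ ((1:ℝ)/3)) 3, ← Real.rpow_mul hm0]
    norm_num
  have hyR : (1:ℝ) ≤ (y:ℝ) := by exact_mod_cast hy
  have hy0 : (0:ℝ) < (y:ℝ) := by linarith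
  have ha2 : (8:ℝ)/3 < a ^ 2 := by nlinarith [sq_nonneg (a - 2), sq_nonneg (a + 2), hapos]
  set D : ℝ := (x:ℝ)^2 + (x:ℝ)*a*(y:ℝ) + a^2*(y:ℝ)^2 with hDdef
  have hD : 2*(y:ℝ) < D := by
    nlinarith [sq_nonneg ((x:ℝ) + a*(y:ℝ)/2), sq_nonneg ((y:ℝ) - 1), sq_nonneg (y:ℝ), hy0]
  have hDpos : 0 < D := by nlinarith
  have habs : |(x:ℝ) - a*(y:ℝ)| * D = 1 := by
    have key : ((x:ℝ) - a*(y:ℝ)) * D = (x:ℝ)^3 - (m:ℝ)*(y:ℝ)^3 := by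
      rw [← ha3]; ring
    rcases h with h | h
    · have : ((x:ℝ)^3 - (m:ℝ)*(y:ℝ)^3) = 1 := by exact_mod_cast h
      rw [← abs_of_pos hDpos, ← abs_mul, key, this, abs_one]
    · have : ((x:ℝ)^3 - (m:ℝ)*(y:ℝ)^3) = -1 := by exact_mod_cast h
      rw [← abs_of_pos hDpos, ← abs_mul, key, this]
      norm_num
  have hxay : |(x:ℝ) - a*(y:ℝ)| = 1 / D := by
    field_simp at habs ⊢
    linarith [habs]
  have hrw : a - (x:ℝ)/(y:ℝ) = -(((x:ℝ) - a*(y:ℝ))/(y:ℝ)) := by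
    field_simp
    ring
  rw [hrw, abs_neg, abs_div, abs_of_pos hy0, hxay]
  rw [div_div, div_lt_div_iff₀ (by positivity) (by positivity)]
  nlinarith [hD, hy0, hyR]
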